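/- arXiv:2209.08424 — 3 statements merged into one kernel-verified Lean document; each statement's English description precedes it below -/
import Mathlib

section
/- Let P be a probability measure on a measurable space M and suppose ρ ∈ L²(P) satisfies ∫ ρ dP = 0 and ρ ≥ c P-a.e. for some real constant c < 0. Then the measure Q defined by dQ = (1 − c⁻¹ρ) dP is a probability measure, and for every f ∈ L²(P) with ∫ fρ dP = 0 one has ∫ f dQ = ∫ f dP. -/
open MeasureTheory
open scoped NNReal ENNReal

/-- If `ρ ∈ L²(P)` has mean zero and is bounded below `P`-a.e. by a constant `c < 0`, then
`dQ = (1 - c⁻¹ ρ) dP` is a probability measure whose integrals agree with those of `P`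
on every `f ∈ L²(P)` orthogonal to `ρ`. -/
theorem stmt1 {M : Type*} [MeasurableSpace M] (P : Measure M) [IsProbabilityMeasure P]
    (ρ : M → ℝ) (hρ : MemLp ρ 2 P) (hmean : ∫ x, ρ x ∂P = 0)
    (c : ℝ) (hc : c < 0) (hlb : ∀ᵐ x ∂P, c ≤ ρ x)
    (Q : Measure M) (hQ : Q = P.withDensity fun x => ENNReal.ofReal (1 - c⁻¹ * ρ x)) :
    IsProbabilityMeasure Q ∧
      ∀ f : M → ℝ, MemLp f 2 P → (∫ x, f x * ρ x ∂P = 0) →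
        ∫ x, f x ∂Q = ∫ x, f x ∂P := by
  set g : M → ℝ := fun x => 1 - c⁻¹ * ρ x with hg
  have hρint : Integrable ρ P := hρ.integrable (by norm_num)
  have hgint : Integrable g P := (integrable_const 1).sub (hρint.const_mul _)
  have hg0 : ∀ᵐ x ∂P, 0 ≤ g x := by
    filter_upwards [hlb] with x hx
    have : c⁻¹ * ρ x ≤ c⁻¹ * c := by
      exact mul_le_mul_of_nonpos_left hx (le_of_lt (inv_neg''.mpr hc))
    have h1 : c⁻¹ * ρ x ≤ 1 := by
      rwa [inv_mul_cancel₀ (ne_of_lt hc)] at this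
    simpa [hg] using sub_nonneg.mpr h1
  have hgi : ∫ x, g x ∂P = 1 := by
    simp [hg, integral_sub (integrable_const 1) (hρint.const_mul _),
      integral_const_mul, hmean]
  have hgm : AEMeasurable (fun x => Real.toNNReal (g x)) P := by
    exact (aemeasurable_const.sub
      (aemeasurable_const.mul hρ.aestronglyMeasurable.aemeasurable)).real_toNNReal
  have hdens : (fun x => ENNReal.ofReal (g x))
      = fun x => ((Real.toNNReal (g x) : ℝ≥0) : ℝ≥0∞) := rfl
  constructor
  · constructor
    rw [hQ, withDensity_apply _ MeasurableSet.univ, Measure.restrict_univ,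
      ← ofReal_integral_eq_lintegral_ofReal hgint hg0, hgi, ENNReal.ofReal_one]
  · intro f hf horth
    have hfρ : Integrable (fun x => f x * ρ x) P := by
      exact (hρ.smul hf (r := 1)).integrable le_rfl
    have hfint : Integrable f P := hf.integrable (by norm_num)
    have h1 : ∫ x, f x ∂Q = ∫ x, Real.toNNReal (g x) • f x ∂P := by
      rw [hQ, hdens, integral_withDensity_eq_integral_smul₀ hgm]
    have h2 : ∀ᵐ x ∂P, Real.toNNReal (g x) • f x = f x - c⁻¹ * (f x * ρ x) := by
      filter_upwards [hg0] with x hx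
      rw [NNReal.smul_def, smul_eq_mul, Real.coe_toNNReal _ hx]
      simp only [hg]; ring
    rw [h1, integral_congr_ae h2,
      integral_sub hfint (hfρ.const_mul _), integral_const_mul, horth]
    simp
end

section
/- Let (S, μ) be a finite measure space and f : S → ℝ a μ-a.e. finite measurable function. Let F = {ψ ∈ L²(μ) : f·ψ ∈ L²(μ)} and suppose: (a) ∫ f ψ² dμ ≥ 0 for all ψ ∈ F, and (c) {f·ψ : ψ ∈ F} = L²(μ). Then f > 0 μ-almost everywhere (in particular μ{f = 0} = 0 and μ{f < 0} = 0). -/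
open MeasureTheory

/-- Spectral-representation step: if multiplication by `f` on `L²(μ)` (with natural domain)
has a nonnegative quadratic form and is surjective onto `L²(μ)`, then `f > 0` a.e. -/
theorem stmt7 {S : Type*} [MeasurableSpace S] (μ : Measure S) [IsFiniteMeasure μ]
    (f : S → ℝ) (hf : Measurable f)
    (hquad : ∀ ψ : S → ℝ, MemLp ψ 2 μ → MemLp (fun x => f x * ψ x) 2 μ →
      0 ≤ ∫ x, f x * ψ x ^ 2 ∂μ)
    (hsurj : ∀ g : S → ℝ, MemLp g 2 μ →
      ∃ ψ : S → ℝ, MemLp ψ 2 μ ∧ MemLp (fun x => f x * ψ x) 2 μ ∧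
        (fun x => f x * ψ x) =ᵐ[μ] g) :
    ∀ᵐ x ∂μ, 0 < f x := by
  -- the zero set has measure zero, by surjectivity
  have hNmeas : MeasurableSet {x | f x = 0} := hf (measurableSet_singleton 0)
  have hμN : μ {x | f x = 0} = 0 := by
    obtain ⟨ψ, hψ, hfψ, heq⟩ := hsurj (Set.indicator {x | f x = 0} 1)
      (memLp_indicator_const 2 hNmeas 1 (Or.inr (measure_ne_top μ _)))
    rw [Filter.EventuallyEq, ae_iff] at heq
    refine measure_mono_null ?_ heq
    intro x hx
    show ¬ f x * ψ x = Set.indicator {x | f x = 0} 1 x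
    rw [Set.indicator_of_mem hx]
    have h0 : f x = 0 := hx
    rw [h0]
    norm_num
  -- each truncated negative set has measure zero, by positivity of the form
  have hμA : ∀ n : ℕ, μ {x | f x ∈ Set.Icc (-((n : ℝ)+1)) (-(1/((n : ℝ)+1)))} = 0 := by
    intro n
    set A : Set S := {x | f x ∈ Set.Icc (-((n : ℝ)+1)) (-(1/((n : ℝ)+1)))} with hAdef
    have hAmeas : MeasurableSet A := hf measurableSet_Icc
    have hpos : (0:ℝ) < 1/((n : ℝ)+1) := by positivity
    set ψ : S → ℝ := A.indicator (fun _ => (1:ℝ)) with hψdef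
    have hψ : MemLp ψ 2 μ := memLp_indicator_const 2 hAmeas 1 (Or.inr (measure_ne_top μ _))
    have key : (fun x => f x * ψ x) = A.indicator f := by
      funext x; by_cases hx : x ∈ A <;> simp [hψdef, hx]
    have hbound : ∀ x ∈ A, |f x| ≤ (n : ℝ) + 1 := by
      intro x hx
      obtain ⟨h1, h2⟩ := hx
      rw [abs_le]
      constructor <;> linarith
    have hfψ : MemLp (fun x => f x * ψ x) 2 μ := by
      rw [key]
      refine MemLp.of_bound ((hf.indicator hAmeas).aestronglyMeasurable) ((n:ℝ)+1) ?_
      filter_upwards with x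
      by_cases hx : x ∈ A
      · rw [Set.indicator_of_mem hx, Real.norm_eq_abs]
        exact hbound x hx
      · rw [Set.indicator_of_notMem hx]
        simp; positivity
    have hq := hquad ψ hψ hfψ
    have hcalc : ∫ x, f x * ψ x ^ 2 ∂μ = ∫ x in A, f x ∂μ := by
      have h2 : (fun x => f x * ψ x ^ 2) = A.indicator f := by
        funext x; by_cases hx : x ∈ A <;> simp [hψdef, hx]
      rw [h2, integral_indicator hAmeas]
    rw [hcalc] at hq
    have hint : IntegrableOn f A μ := by
      refine Measure.integrableOn_of_bounded (M := (n:ℝ)+1) (measure_ne_top μ A)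
        hf.aestronglyMeasurable ?_
      filter_upwards [ae_restrict_mem hAmeas] with x hx
      rw [Real.norm_eq_abs]; exact hbound x hx
    have hle : ∫ x in A, f x ∂μ ≤ ∫ _x in A, (-(1/((n : ℝ)+1))) ∂μ := by
      refine setIntegral_mono_on hint (integrableOn_const ?_) hAmeas ?_
      · exact (measure_lt_top μ A).ne
      · intro x hx; exact hx.2
    rw [setIntegral_const] at hle
    by_contra hne
    have hApos : 0 < (μ A).toReal :=
      ENNReal.toReal_pos hne (measure_ne_top μ A)
    have : (μ A).toReal • (-(1/((n : ℝ)+1))) < 0 := by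
      rw [smul_eq_mul]; nlinarith
    exact absurd (lt_of_le_of_lt hle this) (not_lt.2 hq)
  -- combine
  rw [ae_iff]
  refine measure_mono_null ?_
    (measure_union_null hμN (measure_iUnion_null hμA))
  intro x hx
  simp only [Set.mem_setOf_eq, not_lt] at hx
  rcases eq_or_lt_of_le hx with h | h
  · exact Or.inl (show f x = 0 from h)
  · right
    obtain ⟨n, hn⟩ := exists_nat_ge (max (-f x) (1/(-f x)))
    refine Set.mem_iUnion.2 ⟨n, ?_, ?_⟩
    · have : -f x ≤ (n : ℝ) := le_trans (le_max_left _ _) hn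
      show -((n:ℝ)+1) ≤ f x
      linarith
    · have h1 : 1/(-f x) ≤ (n : ℝ) + 1 := by
        have := le_trans (le_max_right (-f x) (1/(-f x))) hn
        linarith
      have hfx : 0 < -f x := by linarith
      have := (one_div_le hfx (by positivity : (0:ℝ) < (n:ℝ)+1)).mp h1
      show f x ≤ -(1/((n:ℝ)+1))
      linarith
end

section
/- Let P be a probability measure and Q a probability measure with Q ≪ P and dQ/dP ∈ L²(P). Let D ⊆ L²₀(P) be a dense subspace of the mean-zero subspace of L²(P). If ∫ f dQ = 0 for all f ∈ D, then Q = P. -/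
open MeasureTheory
open scoped ENNReal NNReal

/-- (C1) of Theorem 3.5: if `Q ≪ P` with `dQ/dP ∈ L²(P)` and `∫ f dQ = 0` for all `f` in a
dense subspace `D` of the mean-zero subspace `L²₀(P)`, then `Q = P`. -/
theorem stmt10 {M : Type*} [MeasurableSpace M] (P : Measure M) [IsProbabilityMeasure P]
    (ρ : M → ℝ) (hρ : MemLp ρ 2 P)
    (Q : Measure M) [IsProbabilityMeasure Q]
    (hQ : Q = P.withDensity fun x => ENNReal.ofReal (ρ x))
    (D : Submodule ℝ (Lp ℝ 2 P))
    (hD0 : ∀ f ∈ D, ∫ x, f x ∂P = 0)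
    (hDdense : closure (D : Set (Lp ℝ 2 P)) = {f : Lp ℝ 2 P | ∫ x, f x ∂P = 0})
    (hzero : ∀ f ∈ D, ∫ x, f x ∂Q = 0) :
    Q = P := by
  set ρ' : M → ℝ := fun x => max (ρ x) 0 with hρ'def
  have hρ'mem : MemLp ρ' 2 P := hρ.pos_part
  have hρ'nn : ∀ x, 0 ≤ ρ' x := fun x => le_max_right _ _
  have hofReal : ∀ x, ENNReal.ofReal (ρ x) = ENNReal.ofReal (ρ' x) := by
    intro x; simp [ρ', ENNReal.ofReal, Real.toNNReal, max_assoc]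
  set g : Lp ℝ 2 P := hρ'mem.toLp ρ' with hgdef
  have hg_ae : (g : M → ℝ) =ᵐ[P] ρ' := hρ'mem.coeFn_toLp
  -- ∫ f dQ = ∫ ρ' * f dP
  have hQint : ∀ f : M → ℝ, ∫ x, f x ∂Q = ∫ x, ρ' x * f x ∂P := by
    intro f
    rw [hQ]
    have haem : AEMeasurable (fun x => (ρ x).toNNReal) P :=
      hρ.aestronglyMeasurable.aemeasurable.real_toNNReal
    have h1 : (fun x => ENNReal.ofReal (ρ x)) = fun x => ((ρ x).toNNReal : ℝ≥0∞) := rfl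
    rw [h1, integral_withDensity_eq_integral_smul₀ haem f]
    refine integral_congr_ae (Filter.Eventually.of_forall fun x => ?_)
    simp [NNReal.smul_def, ρ', Real.coe_toNNReal', smul_eq_mul]
  -- the functional h ↦ ⟪g, h⟫ vanishes on mean-zero elements
  have inner_eq : ∀ h : Lp ℝ 2 P, (inner ℝ g h : ℝ) = ∫ x, ρ' x * h x ∂P := by
    intro h
    rw [L2.inner_def]
    refine integral_congr_ae ?_
    filter_upwards [hg_ae] with x hx
    simp [hx, RCLike.inner_apply, mul_comm]
  have key : ∀ f : Lp ℝ 2 P, ∫ x, f x ∂P = 0 → ∫ x, ρ' x * f x ∂P = 0 := by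
    intro f hf
    have hmem : f ∈ closure (D : Set (Lp ℝ 2 P)) := by rw [hDdense]; exact hf
    have hcont : Continuous fun h : Lp ℝ 2 P => (inner ℝ g h : ℝ) :=
      (innerSL ℝ g).continuous
    have hclosed : IsClosed {h : Lp ℝ 2 P | (inner ℝ g h : ℝ) = 0} :=
      isClosed_eq hcont continuous_const
    have hsub : (D : Set (Lp ℝ 2 P)) ⊆ {h : Lp ℝ 2 P | (inner ℝ g h : ℝ) = 0} := by
      intro h hh
      show (inner ℝ g h : ℝ) = 0
      rw [inner_eq, ← hQint h]
      exact hzero h hh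
    have h0 : (inner ℝ g f : ℝ) = 0 := (hclosed.closure_subset_iff.2 hsub) hmem
    rw [← inner_eq f]; exact h0
  -- ∫ ρ' dP = 1
  have hQuniv : (∫⁻ x, ENNReal.ofReal (ρ' x) ∂P) = 1 := by
    have := measure_univ (μ := Q)
    rw [hQ] at this
    simpa [lintegral_congr fun x => (hofReal x).symm] using this
  have hint1 : ∫ x, ρ' x ∂P = 1 := by
    rw [integral_eq_lintegral_of_nonneg_ae (Filter.Eventually.of_forall hρ'nn)
      hρ'mem.aestronglyMeasurable, hQuniv]
    simp
  -- mean-zero element g - 1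
  have honemem : MemLp (fun _ : M => (1 : ℝ)) 2 P := memLp_const 1
  set one : Lp ℝ 2 P := honemem.toLp _ with honedef
  have hone_ae : (one : M → ℝ) =ᵐ[P] fun _ => (1 : ℝ) := honemem.coeFn_toLp
  have hgint : Integrable (g : M → ℝ) P := (Lp.memLp g).integrable one_le_two
  have honeint : Integrable (one : M → ℝ) P := (Lp.memLp one).integrable one_le_two
  have hf0 : ∫ x, (g - one : Lp ℝ 2 P) x ∂P = 0 := by
    have hc : ((g - one : Lp ℝ 2 P) : M → ℝ) =ᵐ[P] fun x => g x - one x :=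
      Lp.coeFn_sub g one
    rw [integral_congr_ae hc, integral_sub hgint honeint,
      integral_congr_ae hg_ae, integral_congr_ae hone_ae, hint1]
    simp
  have hsq : ∫ x, ρ' x * ρ' x ∂P = 1 := by
    have := key (g - one) hf0
    have hc : (fun x => ρ' x * (g - one : Lp ℝ 2 P) x) =ᵐ[P]
        fun x => ρ' x * ρ' x - ρ' x := by
      filter_upwards [Lp.coeFn_sub g one, hg_ae, hone_ae] with x h1 h2 h3
      rw [h1, Pi.sub_apply, h2, h3]; ring
    rw [integral_congr_ae hc] at this
    have hint_sq : Integrable (fun x => ρ' x * ρ' x) P := by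
      simpa [sq] using hρ'mem.integrable_sq
    rw [integral_sub hint_sq (hρ'mem.integrable one_le_two), hint1] at this
    linarith
  -- ∫ (ρ' - 1)^2 = 0
  have hintdiff : Integrable (fun x => (ρ' x - 1) ^ 2) P := by
    have : (fun x => (ρ' x - 1) ^ 2) = fun x => ρ' x * ρ' x - 2 * ρ' x + 1 := by
      ext x; ring
    rw [this]
    exact ((by simpa [sq] using hρ'mem.integrable_sq : Integrable (fun x => ρ' x * ρ' x) P).sub
      ((hρ'mem.integrable one_le_two).const_mul 2)).add (integrable_const 1)
  have hzero_sq : ∫ x, (ρ' x - 1) ^ 2 ∂P = 0 := by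
    have hc : (fun x => (ρ' x - 1) ^ 2) = fun x => ρ' x * ρ' x - 2 * ρ' x + 1 := by
      ext x; ring
    have hA : Integrable (fun x => ρ' x * ρ' x) P := by simpa [sq] using hρ'mem.integrable_sq
    have hB : Integrable (fun x => 2 * ρ' x) P := (hρ'mem.integrable one_le_two).const_mul 2
    have hAB : Integrable (fun x => ρ' x * ρ' x - 2 * ρ' x) P := hA.sub hB
    rw [hc, integral_add hAB (integrable_const 1), integral_sub hA hB,
      integral_const_mul, hint1, hsq]
    norm_num
  have hae1 : ρ' =ᵐ[P] fun _ => (1 : ℝ) := by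
    have h := (integral_eq_zero_iff_of_nonneg
      (fun x => sq_nonneg (ρ' x - 1)) hintdiff).1 hzero_sq
    filter_upwards [h] with x hx
    have : (ρ' x - 1) ^ 2 = 0 := hx
    have := pow_eq_zero_iff (n := 2) (by norm_num) |>.1 this
    linarith [this]
  -- conclude
  rw [hQ]
  have : (fun x => ENNReal.ofReal (ρ x)) =ᵐ[P] fun _ => (1 : ℝ≥0∞) := by
    filter_upwards [hae1] with x hx
    rw [hofReal, hx]; simp
  rw [withDensity_congr_ae this]
  exact withDensity_one
end
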